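/- For every permutation w of {1,…,n}, the word φ(w) is a Motzkin path of length n; that is, every prefix of φ(w) contains at least as many U's as D's, and φ(w) contains equally many U's and D's. -/

import Mathlib

/-- The three kinds of steps of a Motzkin path. -/
inductive Step : Type
  | U : Step
  | D : Step
  | H : Step
deriving DecidableEq
instance : Fintype Step := ⟨{Step.U, Step.D, Step.H}, fun x => by cases x <;> simp⟩
/-- Number of indices `i` with `i < m` (i.e. in the prefix of length `m`,
with 0-based indexing) at which the word `p` has the letter `s`. -/
def countIn {n : ℕ} (p : Fin n → Step) (s : Step) (m : ℕ) : ℕ :=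
  (Finset.univ.filter (fun i : Fin n => (i : ℕ) < m ∧ p i = s)).card
/-- A word `p` of length `n` over `{U, D, H}` is a Motzkin path if every
prefix contains at least as many `U`'s as `D`'s and the whole word contains
equally many `U`'s and `D`'s. -/
def IsMotzkin {n : ℕ} (p : Fin n → Step) : Prop :=
  (∀ m ≤ n, countIn p Step.D m ≤ countIn p Step.U m) ∧
  countIn p Step.U n = countIn p Step.D n
/-- The map `φ` from permutations of `{1,…,n}` to words over `{U,D,H}`:
`p_i = U` if `w⁻¹(i) > i < w(i)`, `p_i = D` if `w⁻¹(i) < i > w(i)`,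
and `p_i = H` otherwise. -/
def phi {n : ℕ} (w : Equiv.Perm (Fin n)) : Fin n → Step := fun i =>
  if i < w.symm i ∧ i < w i then Step.U
  else if w.symm i < i ∧ w i < i then Step.D
  else Step.H
lemma phi_eq_U {n : ℕ} (w : Equiv.Perm (Fin n)) (i : Fin n) :
    phi w i = Step.U ↔ (i < w.symm i ∧ i < w i) := by
  unfold phi; split_ifs with h1 h2 <;> simp_all

lemma phi_eq_D {n : ℕ} (w : Equiv.Perm (Fin n)) (i : Fin n) :
    phi w i = Step.D ↔ (w.symm i < i ∧ w i < i) := by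
  unfold phi; split_ifs with h1 h2 <;> simp_all
  intro h
  exact h1.2.le


/-- For every permutation `w` of `{1,…,n}`, the word `φ(w)` is a Motzkin
path of length `n`: every prefix contains at least as many `U`'s as `D`'s,
and the whole word contains equally many `U`'s and `D`'s. -/
theorem phi_isMotzkin (n : ℕ) (w : Equiv.Perm (Fin n)) :
    IsMotzkin (phi w) := by
  -- auxiliary facts
  have hsne : ∀ i : Fin n, i < w i → w.symm i ≠ i := by
    intro i h he
    rw [Equiv.symm_apply_eq] at he
    exact absurd he h.ne
  have hwne : ∀ i : Fin n, w.symm i < i → w i ≠ i := by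
    intro i h he
    have : w.symm i = i := by rw [Equiv.symm_apply_eq, he]
    exact absurd this h.ne
  -- key counting identities
  have e1 : ∀ m : ℕ, countIn (phi w) Step.U m
      + (Finset.univ.filter (fun i : Fin n => ((i:ℕ) < m ∧ i < w i) ∧ w.symm i < i)).card
      = (Finset.univ.filter (fun i : Fin n => (i:ℕ) < m ∧ i < w i)).card := by
    intro m
    have h1 : countIn (phi w) Step.U m
        = ((Finset.univ.filter (fun i : Fin n => (i:ℕ) < m ∧ i < w i)).filter
            (fun i => i < w.symm i)).card := by
      unfold countIn
      rw [Finset.filter_filter]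
      congr 1
      apply Finset.filter_congr
      intro i _
      rw [phi_eq_U]
      tauto
    have h2 : (Finset.univ.filter (fun i : Fin n => ((i:ℕ) < m ∧ i < w i) ∧ w.symm i < i))
        = ((Finset.univ.filter (fun i : Fin n => (i:ℕ) < m ∧ i < w i)).filter
            (fun i => ¬ i < w.symm i)) := by
      rw [Finset.filter_filter]
      apply Finset.filter_congr
      intro i _
      constructor
      · rintro ⟨h, hs⟩; exact ⟨h, not_lt.mpr hs.le⟩
      · rintro ⟨h, hs⟩
        exact ⟨h, lt_of_le_of_ne (not_lt.mp hs) (hsne i h.2)⟩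
    rw [h1, h2, Finset.card_filter_add_card_filter_not]
  have e2 : ∀ m : ℕ, countIn (phi w) Step.D m
      + (Finset.univ.filter (fun i : Fin n => ((i:ℕ) < m ∧ i < w i) ∧ w.symm i < i)).card
      = (Finset.univ.filter (fun i : Fin n => i < w i ∧ ((w i : ℕ)) < m)).card := by
    intro m
    have hbij : (Finset.univ.filter (fun j : Fin n => (j:ℕ) < m ∧ w.symm j < j)).card
        = (Finset.univ.filter (fun i : Fin n => i < w i ∧ ((w i : ℕ)) < m)).card := by
      apply Finset.card_bij (fun j _ => w.symm j)
      · intro j hj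
        simp only [Finset.mem_filter, Finset.mem_univ, true_and] at hj ⊢
        rw [Equiv.apply_symm_apply]
        exact ⟨hj.2, hj.1⟩
      · intro a ha b hb hab
        exact w.symm.injective hab
      · intro i hi
        simp only [Finset.mem_filter, Finset.mem_univ, true_and] at hi
        refine ⟨w i, ?_, by simp⟩
        simp only [Finset.mem_filter, Finset.mem_univ, true_and,
          Equiv.symm_apply_apply]
        exact ⟨hi.2, hi.1⟩
    have h1 : countIn (phi w) Step.D m
        = ((Finset.univ.filter (fun j : Fin n => (j:ℕ) < m ∧ w.symm j < j)).filter
            (fun j => w j < j)).card := by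
      unfold countIn
      rw [Finset.filter_filter]
      congr 1
      apply Finset.filter_congr
      intro i _
      rw [phi_eq_D]
      tauto
    have h2 : (Finset.univ.filter (fun i : Fin n => ((i:ℕ) < m ∧ i < w i) ∧ w.symm i < i))
        = ((Finset.univ.filter (fun j : Fin n => (j:ℕ) < m ∧ w.symm j < j)).filter
            (fun j => ¬ w j < j)) := by
      rw [Finset.filter_filter]
      apply Finset.filter_congr
      intro i _
      constructor
      · rintro ⟨⟨hm, hw⟩, hs⟩; exact ⟨⟨hm, hs⟩, not_lt.mpr hw.le⟩
      · rintro ⟨⟨hm, hs⟩, hw⟩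
        exact ⟨⟨hm, lt_of_le_of_ne (not_lt.mp hw) (Ne.symm (hwne i hs))⟩, hs⟩
    rw [h1, h2, Finset.card_filter_add_card_filter_not, hbij]
  constructor
  · intro m _
    have hsub : (Finset.univ.filter (fun i : Fin n => i < w i ∧ ((w i : ℕ)) < m))
        ⊆ (Finset.univ.filter (fun i : Fin n => (i:ℕ) < m ∧ i < w i)) := by
      intro i hi
      simp only [Finset.mem_filter, Finset.mem_univ, true_and] at hi ⊢
      exact ⟨lt_trans (Fin.lt_def.mp hi.1) hi.2, hi.1⟩
    have := Finset.card_le_card hsub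
    have := e1 m
    have := e2 m
    omega
  · have hset : (Finset.univ.filter (fun i : Fin n => i < w i ∧ ((w i : ℕ)) < n))
        = (Finset.univ.filter (fun i : Fin n => (i:ℕ) < n ∧ i < w i)) := by
      apply Finset.filter_congr
      intro i _
      simp [i.isLt, (w i).isLt]
    have h1 := e1 n
    have h2 := e2 n
    rw [hset] at h2
    omega
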